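/- Let p be a prime with p ≡ 7 (mod 8). The bordered quadratic double circulant code B_p(1+u+uω, ω+uω, 1+ω, u, 1+uω, 1+uω) over F₄+uF₄, i.e. the row span of the (p+1)×(2p+2) matrix [ I_{p+1} | M ] where M has top-left entry u, top row continuing with p entries equal to 1+uω, left column continuing with p entries equal to 1+uω, and lower-right p×p block Q_p(1+u+uω, ω+uω, 1+ω), is a self-dual code of length 2p+2 over F₄+uF₄. -/

import Mathlib

noncomputable section

open Matrix
open scoped Classical

/-- The quadratic residue circulant matrix `Q_p(a,b,c)`: the `p × p` circulant matrix
(indexed by `ZMod p`) whose `(i,j)` entry is `a` if `j - i = 0`, `b` if `j - i` is a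
nonzero quadratic residue modulo `p`, and `c` if `j - i` is a quadratic non-residue. -/
def Qcirc {R : Type*} [CommRing R] (p : ℕ) (a b c : R) :
    Matrix (ZMod p) (ZMod p) R :=
  Matrix.of fun i j =>
    if j - i = 0 then a else if IsSquare (j - i) then b else c

/-- The bordered matrix `M` of size `(p+1) × (p+1)` (rows and columns indexed by
`Option (ZMod p)`, with `none` the border index): `M[none,none] = lam`,
`M[none, some j] = beta`, `M[some i, none] = gam`, and the lower-right `p × p`
block is `Q_p(a,b,c)`. -/
def borderedQ {R : Type*} [CommRing R] (p : ℕ) (a b c lam beta gam : R) :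
    Option (ZMod p) → Option (ZMod p) → R := fun i j =>
  match i, j with
  | none, none => lam
  | none, some _ => beta
  | some _, none => gam
  | some i', some j' => Qcirc p a b c i' j'

/-- The rows of the generator matrix `[ I_{p+1} | M ]` of the bordered quadratic
double circulant code, as vectors of length `2p + 2`. -/
def borderedQDCGen {R : Type*} [CommRing R] (p : ℕ) (a b c lam beta gam : R) :
    Option (ZMod p) → (Option (ZMod p) ⊕ Option (ZMod p)) → R := fun i =>
  Sum.elim (fun j => if i = j then 1 else 0) (fun j => borderedQ p a b c lam beta gam i j)

/-- The bordered quadratic double circulant code `B_p(a,b,c,λ,β,γ)`: the row span of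
`[ I_{p+1} | M ]`, a linear code of length `2p + 2` over `R`. -/
def borderedQDC {R : Type*} [CommRing R] (p : ℕ) (a b c lam beta gam : R) :
    Submodule R ((Option (ZMod p) ⊕ Option (ZMod p)) → R) :=
  Submodule.span R (Set.range (borderedQDCGen p a b c lam beta gam))

/-- The dual of a code `C ⊆ Rⁿ` with respect to the Euclidean inner product. -/
def dualSet {R ι : Type*} [CommRing R] [Fintype ι] (C : Set (ι → R)) : Set (ι → R) :=
  {x | ∀ y ∈ C, ∑ i, x i * y i = 0}

/-- The field `F₄` with four elements. -/
abbrev F4 := GaloisField 2 2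

/-- The ring `F₄ + u F₄ = F₄[u]/(u²)`. -/
abbrev R4 := DualNumber F4

/-! ### Auxiliary number-theoretic lemmas -/

section NT
variable {p : ℕ} [Fact p.Prime]

private lemma quadChar_shift_sum (hp2 : p ≠ 2) {d : ZMod p} (hd : d ≠ 0) :
    ∑ t : ZMod p, quadraticChar (ZMod p) t * quadraticChar (ZMod p) (t + d) = -1 := by
  have hchar : ringChar (ZMod p) ≠ 2 := by rw [ZMod.ringChar_zmod_n]; exact hp2
  have key : ∀ t : ZMod p, t ≠ 0 →
      quadraticChar (ZMod p) t * quadraticChar (ZMod p) (t + d)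
        = quadraticChar (ZMod p) (1 + d * t⁻¹) := by
    intro t ht
    have h1 : t * (1 + d * t⁻¹) = t + d := by field_simp
    rw [← h1, _root_.map_mul, ← mul_assoc, ← sq, quadraticChar_sq_one ht, one_mul]
  have h0 : ∑ t : ZMod p, quadraticChar (ZMod p) t * quadraticChar (ZMod p) (t + d)
      = ∑ t ∈ Finset.univ.erase (0 : ZMod p),
          quadraticChar (ZMod p) t * quadraticChar (ZMod p) (t + d) := by
    rw [Finset.sum_erase_eq_sub (Finset.mem_univ 0), quadraticChar_zero, zero_mul, sub_zero]
  have h1 : ∑ t ∈ Finset.univ.erase (0 : ZMod p),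
      quadraticChar (ZMod p) t * quadraticChar (ZMod p) (t + d)
      = ∑ s ∈ Finset.univ.erase (1 : ZMod p), quadraticChar (ZMod p) s := by
    refine Finset.sum_nbij' (fun t => 1 + d * t⁻¹) (fun s => d * (s - 1)⁻¹) ?_ ?_ ?_ ?_ ?_
    · intro t ht
      simp only [Finset.mem_erase, Finset.mem_univ, and_true] at ht ⊢
      intro hcon
      exact (mul_ne_zero hd (inv_ne_zero ht)) (add_eq_left.mp hcon)
    · intro s hs
      simp only [Finset.mem_erase, Finset.mem_univ, and_true] at hs ⊢
      have h1 : s - 1 ≠ 0 := sub_ne_zero.mpr hs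
      exact mul_ne_zero hd (inv_ne_zero h1)
    · intro t ht
      simp only [Finset.mem_erase, Finset.mem_univ, and_true] at ht
      field_simp
      rw [add_sub_cancel_left, div_self hd]
    · intro s hs
      simp only [Finset.mem_erase, Finset.mem_univ, and_true] at hs
      have h1 : s - 1 ≠ 0 := sub_ne_zero.mpr hs
      field_simp
      ring
    · intro t ht
      simp only [Finset.mem_erase, Finset.mem_univ, and_true] at ht
      exact key t ht
  rw [h0, h1, Finset.sum_erase_eq_sub (Finset.mem_univ 1), quadraticChar_sum_zero hchar,
    _root_.map_one]
  norm_num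

private lemma card_sq_eq (hp2 : p ≠ 2) :
    2 * (Finset.univ.filter fun t : ZMod p => quadraticChar (ZMod p) t = 1).card + 1 = p := by
  have hchar : ringChar (ZMod p) ≠ 2 := by rw [ZMod.ringChar_zmod_n]; exact hp2
  have hsum : ∑ t : ZMod p, ((1 : ℤ) + quadraticChar (ZMod p) t) = p := by
    rw [Finset.sum_add_distrib, quadraticChar_sum_zero hchar, add_zero, Finset.sum_const,
      Finset.card_univ, ZMod.card, nsmul_eq_mul, mul_one]
  have hpt : ∀ t : ZMod p, (1 : ℤ) + quadraticChar (ZMod p) t =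
      (if quadraticChar (ZMod p) t = 1 then 2 else 0) + (if t = 0 then 1 else 0) := by
    intro t
    by_cases ht : t = 0
    · subst ht; simp [quadraticChar_zero]
    · rcases quadraticChar_dichotomy ht with h | h <;> simp [h, ht]
  rw [Finset.sum_congr rfl (fun t _ => hpt t)] at hsum
  rw [Finset.sum_add_distrib] at hsum
  have e1 : ∑ t : ZMod p, (if quadraticChar (ZMod p) t = 1 then (2:ℤ) else 0)
      = 2 * (Finset.univ.filter fun t : ZMod p => quadraticChar (ZMod p) t = 1).card := by
    rw [← Finset.sum_filter, Finset.sum_const, nsmul_eq_mul]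
    ring
  have e2 : ∑ t : ZMod p, (if t = 0 then (1:ℤ) else 0) = 1 := by
    simp [Finset.sum_ite_eq']
  rw [e1, e2] at hsum
  exact_mod_cast hsum

private lemma card_pair_odd (h7 : p % 8 = 7) {d : ZMod p} (hd : d ≠ 0) :
    (Finset.univ.filter fun t : ZMod p =>
      quadraticChar (ZMod p) t = 1 ∧ quadraticChar (ZMod p) (t + d) = 1).card % 2 = 1 := by
  have hp2 : p ≠ 2 := by omega
  have hchar : ringChar (ZMod p) ≠ 2 := by rw [ZMod.ringChar_zmod_n]; exact hp2
  have hp4 : p % 4 = 3 := by omega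
  have hm1 : ¬ IsSquare (-1 : ZMod p) := by
    rw [ZMod.exists_sq_eq_neg_one_iff]
    simp [hp4]
  have hχm1 : quadraticChar (ZMod p) (-1) = -1 :=
    quadraticChar_neg_one_iff_not_isSquare.mpr hm1
  have hχneg : quadraticChar (ZMod p) (-d) = - quadraticChar (ZMod p) d := by
    rw [show (-d : ZMod p) = -1 * d by ring, _root_.map_mul, hχm1]
    ring
  set N := (Finset.univ.filter fun t : ZMod p =>
      quadraticChar (ZMod p) t = 1 ∧ quadraticChar (ZMod p) (t + d) = 1).card with hN
  have hshift : ∑ t : ZMod p, quadraticChar (ZMod p) (t + d) = 0 := by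
    exact (Fintype.sum_equiv (Equiv.addRight d)
      (fun t : ZMod p => quadraticChar (ZMod p) (t + d))
      (fun s => quadraticChar (ZMod p) s) (fun t => rfl)).trans
      (quadraticChar_sum_zero hchar)
  have hsum1 : ∑ t : ZMod p, ((1:ℤ) + quadraticChar (ZMod p) t)
      * (1 + quadraticChar (ZMod p) (t + d)) = p - 1 := by
    have : ∀ t : ZMod p, ((1:ℤ) + quadraticChar (ZMod p) t)
        * (1 + quadraticChar (ZMod p) (t + d))
        = 1 + quadraticChar (ZMod p) t + quadraticChar (ZMod p) (t + d)
          + quadraticChar (ZMod p) t * quadraticChar (ZMod p) (t + d) := by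
      intro t; ring
    rw [Finset.sum_congr rfl (fun t _ => this t)]
    rw [Finset.sum_add_distrib, Finset.sum_add_distrib, Finset.sum_add_distrib,
      quadraticChar_sum_zero hchar, hshift, quadChar_shift_sum hp2 hd,
      Finset.sum_const, Finset.card_univ, ZMod.card, nsmul_eq_mul, mul_one]
    ring
  have hpt : ∀ t : ZMod p, ((1:ℤ) + quadraticChar (ZMod p) t)
      * (1 + quadraticChar (ZMod p) (t + d))
      = 4 * (if quadraticChar (ZMod p) t = 1 ∧ quadraticChar (ZMod p) (t + d) = 1
          then (1:ℤ) else 0)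
        + (if t = 0 then 1 + quadraticChar (ZMod p) d else 0)
        + (if t = -d then 1 + quadraticChar (ZMod p) (-d) else 0) := by
    intro t
    by_cases ht0 : t = 0
    · subst ht0
      have h0d : (0 : ZMod p) ≠ -d := fun h => hd (neg_eq_zero.mp h.symm)
      simp [quadraticChar_zero, h0d, zero_add]
    · by_cases htd : t = -d
      · subst htd
        have hnd : (-d : ZMod p) ≠ 0 := neg_ne_zero.mpr hd
        simp [quadraticChar_zero, hnd]
      · have htd' : t + d ≠ 0 := fun h => htd (eq_neg_of_add_eq_zero_left h)
        rcases quadraticChar_dichotomy ht0 with h1 | h1 <;>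
          rcases quadraticChar_dichotomy htd' with h2 | h2 <;>
            simp [h1, h2, ht0, htd]
  have hsum2 : ∑ t : ZMod p, ((1:ℤ) + quadraticChar (ZMod p) t)
      * (1 + quadraticChar (ZMod p) (t + d)) = 4 * N + 2 := by
    rw [Finset.sum_congr rfl (fun t _ => hpt t), Finset.sum_add_distrib,
      Finset.sum_add_distrib]
    have e1 : ∑ t : ZMod p, 4 * (if quadraticChar (ZMod p) t = 1 ∧
        quadraticChar (ZMod p) (t + d) = 1 then (1:ℤ) else 0) = 4 * N := by
      rw [← Finset.mul_sum, Finset.sum_boole, hN]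
    have e2 : ∑ t : ZMod p, (if t = 0 then 1 + quadraticChar (ZMod p) d else 0)
        = 1 + quadraticChar (ZMod p) d := by simp [Finset.sum_ite_eq']
    have e3 : ∑ t : ZMod p, (if t = -d then 1 + quadraticChar (ZMod p) (-d) else 0)
        = 1 + quadraticChar (ZMod p) (-d) := by simp [Finset.sum_ite_eq']
    rw [e1, e2, e3, hχneg]
    ring
  have h4N : 4 * N + 3 = p := by
    have : (4 * N + 3 : ℤ) = p := by rw [hsum2] at hsum1; linarith
    exact_mod_cast this
  omega

end NT

/-! ### Auxiliary facts about `R4` -/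

private lemma R4_two : (2 : R4) = 0 := by
  have h4 : (2 : F4) = 0 := by
    have := CharP.cast_eq_zero F4 2
    exact_mod_cast this
  have : (2 : R4) = algebraMap F4 R4 (2 : F4) := by rw [map_ofNat]
  rw [this, h4, map_zero]

private lemma R4_eps_sq : (DualNumber.eps : R4) * DualNumber.eps = 0 :=
  DualNumber.eps_mul_eps

private lemma R4_neg (r : R4) : -r = r := by
  linear_combination (-r) * R4_two

private lemma R4_odd_cast {n : ℕ} (hn : n % 2 = 1) : (n : R4) = 1 := by
  have h := Nat.div_add_mod n 2
  calc (n : R4) = ((2 * (n / 2) + n % 2 : ℕ) : R4) := by rw [h]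
    _ = 2 * ((n / 2 : ℕ) : R4) + ((n % 2 : ℕ) : R4) := by push_cast; ring
    _ = 1 := by rw [hn, R4_two]; norm_num

/-! ### The first row of the circulant block, and the key sums -/

/-- The first-row function of `Q_p(1+u+uω, ω+uω, 1+ω)`. -/
private def fQ (p : ℕ) (ω : R4) (t : ZMod p) : R4 :=
  if t = 0 then 1 + DualNumber.eps + DualNumber.eps * ω
  else if IsSquare t then ω + DualNumber.eps * ω
  else 1 + ω

private lemma Qcirc_eq_fQ (p : ℕ) (ω : R4) (i j : ZMod p) :
    Qcirc p (1 + DualNumber.eps + DualNumber.eps * ω) (ω + DualNumber.eps * ω) (1 + ω) i j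
      = fQ p ω (j - i) := rfl

section KeySum
variable {p : ℕ} [Fact p.Prime]

/-- Decomposition of `fQ` into indicator functions. -/
private lemma fQ_eq (ω : R4) (t : ZMod p) :
    fQ p ω t = (1 + ω)
      + (ω + DualNumber.eps + DualNumber.eps * ω) * (if t = 0 then 1 else 0)
      + (1 + DualNumber.eps * ω) * (if quadraticChar (ZMod p) t = 1 then 1 else 0) := by
  by_cases ht : t = 0
  · subst ht
    have : quadraticChar (ZMod p) (0 : ZMod p) ≠ 1 := by
      rw [quadraticChar_zero]; norm_num
    rw [fQ]
    simp only [eq_self_iff_true, if_true, if_neg this]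
    linear_combination (-ω) * R4_two
  · by_cases hsq : IsSquare t
    · have h1 : quadraticChar (ZMod p) t = 1 := (quadraticChar_one_iff_isSquare ht).mpr hsq
      rw [fQ]
      simp only [if_neg ht, if_pos hsq, if_pos h1]
      linear_combination (-1 : R4) * R4_two
    · have h1 : quadraticChar (ZMod p) t ≠ 1 := fun h =>
        hsq ((quadraticChar_one_iff_isSquare ht).mp h)
      rw [fQ]
      simp only [if_neg ht, if_neg hsq, if_neg h1]
      ring

private lemma sum_e0 : ∑ t : ZMod p, (if t = 0 then (1 : R4) else 0) = 1 := by
  simp [Finset.sum_ite_eq']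

private lemma sum_e1 (h7 : p % 8 = 7) :
    ∑ t : ZMod p, (if quadraticChar (ZMod p) t = 1 then (1 : R4) else 0) = 1 := by
  rw [Finset.sum_boole]
  have hp2 : p ≠ 2 := by omega
  have := card_sq_eq (p := p) hp2
  exact R4_odd_cast (by omega)

/-- The key circulant sum. -/
private lemma key_sum (h7 : p % 8 = 7) (ω : R4) (hω : ω ^ 2 + ω + 1 = 0) (d : ZMod p) :
    ∑ t : ZMod p, fQ p ω (t + d) * fQ p ω t = if d = 0 then 0 else 1 := by
  have hp2 : p ≠ 2 := by omega
  have hpodd : p % 2 = 1 := by omega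
  have hpcast : ((p : ℕ) : R4) = 1 := R4_odd_cast hpodd
  set e : R4 := DualNumber.eps with he
  set cc : R4 := 1 + ω with hcc
  set al : R4 := ω + e + e * ω with hal
  set be : R4 := 1 + e * ω with hbe
  have hexp : ∀ t : ZMod p, fQ p ω (t + d) * fQ p ω t
      = cc * cc * 1
        + cc * al * (if t = 0 then 1 else 0)
        + cc * be * (if quadraticChar (ZMod p) t = 1 then 1 else 0)
        + al * cc * (if t + d = 0 then 1 else 0)
        + be * cc * (if quadraticChar (ZMod p) (t + d) = 1 then 1 else 0)
        + al * al * ((if t + d = 0 then 1 else 0) * (if t = 0 then 1 else 0))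
        + al * be * ((if t + d = 0 then 1 else 0)
            * (if quadraticChar (ZMod p) t = 1 then 1 else 0))
        + al * be * ((if quadraticChar (ZMod p) (t + d) = 1 then 1 else 0)
            * (if t = 0 then 1 else 0))
        + be * be * ((if quadraticChar (ZMod p) (t + d) = 1 then 1 else 0)
            * (if quadraticChar (ZMod p) t = 1 then 1 else 0)) := by
    intro t
    rw [fQ_eq ω (t + d), fQ_eq ω t]
    simp only [← hcc, ← hal, ← hbe, ← he]
    ring
  rw [Finset.sum_congr rfl fun t _ => hexp t]
  simp only [Finset.sum_add_distrib]
  simp only [← Finset.mul_sum]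
  have Tc : ∑ _t : ZMod p, (1 : R4) = 1 := by
    rw [Finset.sum_const, Finset.card_univ, ZMod.card, nsmul_eq_mul, mul_one, hpcast]
  have T0 : ∑ t : ZMod p, (if t = 0 then (1:R4) else 0) = 1 := sum_e0
  have T0d : ∑ t : ZMod p, (if t + d = 0 then (1:R4) else 0) = 1 := by
    simp only [add_eq_zero_iff_eq_neg]
    simp [Finset.sum_ite_eq']
  have T1 : ∑ t : ZMod p, (if quadraticChar (ZMod p) t = 1 then (1:R4) else 0) = 1 :=
    sum_e1 h7
  have T1d : ∑ t : ZMod p,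
      (if quadraticChar (ZMod p) (t + d) = 1 then (1:R4) else 0) = 1 := by
    refine (Fintype.sum_equiv (Equiv.addRight d)
      (fun t : ZMod p => if quadraticChar (ZMod p) (t + d) = 1 then (1:R4) else 0)
      (fun s => if quadraticChar (ZMod p) s = 1 then (1:R4) else 0)
      (fun t => rfl)).trans (sum_e1 h7)
  have T00 : ∑ t : ZMod p,
      ((if t + d = 0 then (1:R4) else 0) * (if t = 0 then 1 else 0))
      = if d = 0 then 1 else 0 := by
    have hpt : ∀ t : ZMod p,
        ((if t + d = 0 then (1:R4) else 0) * (if t = 0 then 1 else 0))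
        = if t = 0 then (if d = 0 then (1:R4) else 0) else 0 := by
      intro t
      by_cases ht : t = 0
      · subst ht; simp [zero_add]
      · simp [ht]
    rw [Finset.sum_congr rfl fun t _ => hpt t]
    simp [Finset.sum_ite_eq']
  have T01 : ∑ t : ZMod p, ((if t + d = 0 then (1:R4) else 0)
        * (if quadraticChar (ZMod p) t = 1 then 1 else 0))
      = if quadraticChar (ZMod p) (-d) = 1 then 1 else 0 := by
    have hpt : ∀ t : ZMod p, ((if t + d = 0 then (1:R4) else 0)
          * (if quadraticChar (ZMod p) t = 1 then 1 else 0))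
        = if t = -d then (if quadraticChar (ZMod p) (-d) = 1 then (1:R4) else 0) else 0 := by
      intro t
      by_cases ht : t = -d
      · subst ht; simp
      · have h2 : t + d ≠ 0 := fun h => ht (eq_neg_of_add_eq_zero_left h)
        simp [ht, h2]
    rw [Finset.sum_congr rfl fun t _ => hpt t]
    simp [Finset.sum_ite_eq']
  have T10 : ∑ t : ZMod p, ((if quadraticChar (ZMod p) (t + d) = 1 then (1:R4) else 0)
        * (if t = 0 then 1 else 0))
      = if quadraticChar (ZMod p) d = 1 then 1 else 0 := by
    have hpt : ∀ t : ZMod p, ((if quadraticChar (ZMod p) (t + d) = 1 then (1:R4) else 0)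
          * (if t = 0 then 1 else 0))
        = if t = 0 then (if quadraticChar (ZMod p) d = 1 then (1:R4) else 0) else 0 := by
      intro t
      by_cases ht : t = 0
      · subst ht; simp [zero_add]
      · simp [ht]
    rw [Finset.sum_congr rfl fun t _ => hpt t]
    simp [Finset.sum_ite_eq']
  have T11 : ∑ t : ZMod p, ((if quadraticChar (ZMod p) (t + d) = 1 then (1:R4) else 0)
        * (if quadraticChar (ZMod p) t = 1 then 1 else 0))
      = 1 := by
    have hpt : ∀ t : ZMod p, ((if quadraticChar (ZMod p) (t + d) = 1 then (1:R4) else 0)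
          * (if quadraticChar (ZMod p) t = 1 then 1 else 0))
        = if (quadraticChar (ZMod p) t = 1 ∧ quadraticChar (ZMod p) (t + d) = 1)
            then (1:R4) else 0 := by
      intro t
      rcases em (quadraticChar (ZMod p) t = 1) with h1 | h1 <;>
        rcases em (quadraticChar (ZMod p) (t + d) = 1) with h2 | h2
      · rw [if_pos h2, if_pos h1, if_pos ⟨h1, h2⟩, one_mul]
      · rw [if_neg h2, if_pos h1, if_neg (fun hc => h2 hc.2), zero_mul]
      · rw [if_pos h2, if_neg h1, if_neg (fun hc => h1 hc.1), mul_zero]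
      · rw [if_neg h2, if_neg h1, if_neg (fun hc => h1 hc.1), zero_mul]
    rw [Finset.sum_congr rfl fun t _ => hpt t, Finset.sum_boole]
    by_cases hd : d = 0
    · subst hd
      have hfe : (Finset.univ.filter fun t : ZMod p =>
            quadraticChar (ZMod p) t = 1 ∧ quadraticChar (ZMod p) (t + 0) = 1)
          = Finset.univ.filter fun t : ZMod p => quadraticChar (ZMod p) t = 1 := by
        apply Finset.filter_congr
        intro t _
        simp [add_zero]
      rw [hfe]
      have := card_sq_eq (p := p) (by omega)
      exact R4_odd_cast (by omega)
    · exact R4_odd_cast (card_pair_odd h7 hd)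
  rw [Tc, T0, T0d, T1, T1d, T00, T01, T10, T11]
  by_cases hd : d = 0
  · subst hd
    have hz : quadraticChar (ZMod p) (0 : ZMod p) ≠ 1 := by
      rw [quadraticChar_zero]; norm_num
    rw [neg_zero, if_neg hz, if_pos rfl, if_pos rfl]
    rw [hcc, hal, hbe, he]
    linear_combination (4 + 6*DualNumber.eps + 2*DualNumber.eps^2) * hω
      + (-1 : R4) * R4_eps_sq
      + (-2*DualNumber.eps + ω + 2*ω*DualNumber.eps) * R4_two
  · rw [if_neg hd, if_neg hd]
    have hp4 : p % 4 = 3 := by omega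
    have hm1 : ¬ IsSquare (-1 : ZMod p) := by
      rw [ZMod.exists_sq_eq_neg_one_iff]; simp [hp4]
    have hχm1 : quadraticChar (ZMod p) (-1 : ZMod p) = -1 :=
      quadraticChar_neg_one_iff_not_isSquare.mpr hm1
    have hχneg : quadraticChar (ZMod p) (-d) = - quadraticChar (ZMod p) d := by
      rw [show (-d : ZMod p) = -1 * d by ring, _root_.map_mul, hχm1]; ring
    have hXY : (if quadraticChar (ZMod p) (-d) = 1 then (1:R4) else 0)
        + (if quadraticChar (ZMod p) d = 1 then 1 else 0) = 1 := by
      rcases quadraticChar_dichotomy (F := ZMod p) hd with h | h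
      · have h' : quadraticChar (ZMod p) (-d) ≠ 1 := by
          rw [hχneg, h]; decide
        rw [if_neg h', if_pos h, zero_add]
      · have h' : quadraticChar (ZMod p) (-d) = 1 := by rw [hχneg, h]; ring
        have h'' : quadraticChar (ZMod p) d ≠ 1 := by rw [h]; decide
        rw [if_pos h', if_neg h'', add_zero]
    rw [hcc, hal, hbe, he]
    linear_combination (al * be) * hXY
      + (3 + 5*DualNumber.eps + 2*DualNumber.eps^2) * hω
      + (-2 - ω) * R4_eps_sq
      + (-DualNumber.eps + 2*ω + 2*ω*DualNumber.eps) * R4_two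

end KeySum

section Border
variable {p : ℕ} [Fact p.Prime]

private lemma row_sum (h7 : p % 8 = 7) (ω : R4) :
    ∑ t : ZMod p, fQ p ω t = DualNumber.eps := by
  rw [Finset.sum_congr rfl fun t _ => fQ_eq ω t]
  simp only [Finset.sum_add_distrib]
  simp only [← Finset.mul_sum]
  rw [sum_e0, sum_e1 h7]
  simp only [Finset.sum_const, Finset.card_univ, ZMod.card, nsmul_eq_mul,
    R4_odd_cast (show p % 2 = 1 by omega)]
  linear_combination (1 + ω + ω * DualNumber.eps) * R4_two

private lemma borderedQ_row_orth (h7 : p % 8 = 7) (ω : R4) (hω : ω ^ 2 + ω + 1 = 0)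
    (i j : Option (ZMod p)) :
    ∑ k : Option (ZMod p),
        borderedQ p (1 + DualNumber.eps + DualNumber.eps * ω) (ω + DualNumber.eps * ω)
          (1 + ω) DualNumber.eps (1 + DualNumber.eps * ω) (1 + DualNumber.eps * ω) i k
      * borderedQ p (1 + DualNumber.eps + DualNumber.eps * ω) (ω + DualNumber.eps * ω)
          (1 + ω) DualNumber.eps (1 + DualNumber.eps * ω) (1 + DualNumber.eps * ω) j k
      = if i = j then 1 else 0 := by
  have hpcast : ((p : ℕ) : R4) = 1 := R4_odd_cast (show p % 2 = 1 by omega)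
  have hsplit : ∀ g : Option (ZMod p) → R4,
      ∑ k, g k = g none + ∑ k : ZMod p, g (some k) := by
    intro g
    rw [univ_option, Finset.sum_insertNone]
  have hββ : (1 + DualNumber.eps * ω) * (1 + DualNumber.eps * ω) = (1:R4) := by
    linear_combination (DualNumber.eps^2) * hω + (-1 - ω) * R4_eps_sq
      + (ω * DualNumber.eps) * R4_two
  match i, j with
  | none, none =>
    rw [hsplit]
    simp only [borderedQ]
    rw [R4_eps_sq, hββ, Finset.sum_const, Finset.card_univ, ZMod.card, nsmul_eq_mul,
      hpcast]
    norm_num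
  | none, some j' =>
    rw [hsplit]
    simp only [borderedQ, Qcirc_eq_fQ]
    have hre : ∑ k : ZMod p, fQ p ω (k - j') = DualNumber.eps :=
      (Fintype.sum_equiv (Equiv.subRight j') (fun k => fQ p ω (k - j'))
        (fun t => fQ p ω t) (fun k => rfl)).trans (row_sum h7 ω)
    rw [← Finset.mul_sum, hre, if_neg (Option.some_ne_none j').symm]
    linear_combination DualNumber.eps * R4_two + (2 * ω) * R4_eps_sq
  | some i', none =>
    rw [hsplit]
    simp only [borderedQ, Qcirc_eq_fQ]
    have hre : ∑ k : ZMod p, fQ p ω (k - i') = DualNumber.eps :=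
      (Fintype.sum_equiv (Equiv.subRight i') (fun k => fQ p ω (k - i'))
        (fun t => fQ p ω t) (fun k => rfl)).trans (row_sum h7 ω)
    rw [← Finset.sum_mul, hre, if_neg (Option.some_ne_none i')]
    linear_combination DualNumber.eps * R4_two + (2 * ω) * R4_eps_sq
  | some i', some j' =>
    rw [hsplit]
    simp only [borderedQ, Qcirc_eq_fQ]
    have hre : ∑ k : ZMod p, fQ p ω (k - i') * fQ p ω (k - j')
        = ∑ t : ZMod p, fQ p ω (t + (j' - i')) * fQ p ω t := by
      refine Fintype.sum_equiv (Equiv.subRight j') _ _ (fun k => ?_)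
      simp only [Equiv.subRight_apply]
      rw [sub_add_sub_cancel]
    rw [hre, key_sum h7 ω hω (j' - i')]
    rcases eq_or_ne i' j' with hij | hij
    · subst hij
      rw [sub_self, if_pos rfl, if_pos rfl, hββ, add_zero]
    · have h1 : j' - i' ≠ 0 := sub_ne_zero.mpr (Ne.symm hij)
      rw [hββ, if_neg h1, if_neg (by simpa using hij)]
      linear_combination R4_two

end Border

section Gen
variable {p : ℕ} [Fact p.Prime]

private lemma gen_orth (h7 : p % 8 = 7) (ω : R4) (hω : ω ^ 2 + ω + 1 = 0)
    (i j : Option (ZMod p)) :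
    ∑ k : Option (ZMod p) ⊕ Option (ZMod p),
        borderedQDCGen p (1 + DualNumber.eps + DualNumber.eps * ω) (ω + DualNumber.eps * ω)
          (1 + ω) DualNumber.eps (1 + DualNumber.eps * ω) (1 + DualNumber.eps * ω) i k
      * borderedQDCGen p (1 + DualNumber.eps + DualNumber.eps * ω) (ω + DualNumber.eps * ω)
          (1 + ω) DualNumber.eps (1 + DualNumber.eps * ω) (1 + DualNumber.eps * ω) j k
      = 0 := by
  rw [Fintype.sum_sum_type]
  simp only [borderedQDCGen, Sum.elim_inl, Sum.elim_inr]
  have h1 : ∑ j' : Option (ZMod p),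
      (if i = j' then (1:R4) else 0) * (if j = j' then 1 else 0)
      = if i = j then 1 else 0 := by
    have hpt : ∀ j' : Option (ZMod p),
        (if i = j' then (1:R4) else 0) * (if j = j' then 1 else 0)
        = if j' = i then (if j = i then (1:R4) else 0) else 0 := by
      intro j'
      by_cases h : i = j'
      · subst h
        rw [if_pos rfl, if_pos rfl, one_mul]
      · rw [if_neg h, zero_mul, if_neg (fun hc : j' = i => h hc.symm)]
    rw [Finset.sum_congr rfl fun j' _ => hpt j', Finset.sum_ite_eq']
    simp only [Finset.mem_univ, if_true]
    by_cases h : i = j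
    · rw [if_pos h.symm, if_pos h]
    · rw [if_neg (fun hc => h hc.symm), if_neg h]
  rw [h1, borderedQ_row_orth h7 ω hω i j]
  by_cases h : i = j
  · rw [if_pos h]
    linear_combination R4_two
  · rw [if_neg h, add_zero]

end Gen

/-- For a prime `p ≡ 7 (mod 8)` and `ω` a root of `x² + x + 1` in `F₄ + u F₄`,
the bordered quadratic double circulant code
`B_p(1 + u + uω, ω + uω, 1 + ω, u, 1 + uω, 1 + uω)` over `F₄ + u F₄`
is self-dual of length `2p + 2`. -/
theorem borderedQDC_self_dual_of_mod_eight_eq_seven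
    (p : ℕ) [NeZero p] (hp : Nat.Prime p) (h7 : p % 8 = 7)
    (ω : R4) (hω : ω ^ 2 + ω + 1 = 0) :
    letI u : R4 := DualNumber.eps
    (borderedQDC p (1 + u + u * ω) (ω + u * ω) (1 + ω) u (1 + u * ω) (1 + u * ω) :
        Set ((Option (ZMod p) ⊕ Option (ZMod p)) → R4)) =
      dualSet (borderedQDC p (1 + u + u * ω) (ω + u * ω) (1 + ω) u (1 + u * ω) (1 + u * ω) :
        Set ((Option (ZMod p) ⊕ Option (ZMod p)) → R4)) := by
  haveI : Fact p.Prime := ⟨hp⟩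
  show (borderedQDC p (1 + DualNumber.eps + DualNumber.eps * ω) (ω + DualNumber.eps * ω)
        (1 + ω) DualNumber.eps (1 + DualNumber.eps * ω) (1 + DualNumber.eps * ω) :
        Set ((Option (ZMod p) ⊕ Option (ZMod p)) → R4))
      = dualSet (borderedQDC p (1 + DualNumber.eps + DualNumber.eps * ω)
        (ω + DualNumber.eps * ω) (1 + ω) DualNumber.eps (1 + DualNumber.eps * ω)
        (1 + DualNumber.eps * ω) :
        Set ((Option (ZMod p) ⊕ Option (ZMod p)) → R4))
  set G : Option (ZMod p) → (Option (ZMod p) ⊕ Option (ZMod p)) → R4 :=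
    borderedQDCGen p (1 + DualNumber.eps + DualNumber.eps * ω) (ω + DualNumber.eps * ω)
      (1 + ω) DualNumber.eps (1 + DualNumber.eps * ω) (1 + DualNumber.eps * ω) with hGdef
  set C : Submodule R4 ((Option (ZMod p) ⊕ Option (ZMod p)) → R4) :=
    borderedQDC p (1 + DualNumber.eps + DualNumber.eps * ω) (ω + DualNumber.eps * ω)
      (1 + ω) DualNumber.eps (1 + DualNumber.eps * ω) (1 + DualNumber.eps * ω) with hCdef
  have hCspan : C = Submodule.span R4 (Set.range G) := rfl
  have hGmem : ∀ i, G i ∈ C := fun i =>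
    hCspan ▸ Submodule.subset_span (Set.mem_range_self i)
  ext x
  simp only [dualSet, Set.mem_setOf_eq, SetLike.mem_coe]
  constructor
  · -- the code is contained in its dual
    intro hx y hy
    rw [hCspan] at hx hy
    refine Submodule.span_induction₂
      (p := fun x y _ _ => ∑ k, x k * y k = 0) ?_ ?_ ?_ ?_ ?_ ?_ ?_ hx hy
    · rintro x y ⟨i, rfl⟩ ⟨j, rfl⟩
      exact gen_orth h7 ω hω i j
    · intro y _; simp
    · intro x _; simp
    · intro x y z _ _ _ hxz hyz
      simp only [Pi.add_apply, add_mul, Finset.sum_add_distrib, hxz, hyz, add_zero]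
    · intro x y z _ _ _ hxy hxz
      simp only [Pi.add_apply, mul_add, Finset.sum_add_distrib, hxy, hxz, add_zero]
    · intro r x y _ _ h
      simp only [Pi.smul_apply, smul_eq_mul, mul_assoc, ← Finset.mul_sum, h, mul_zero]
    · intro r x y _ _ h
      have : ∀ k, x k * (r • y) k = r * (x k * y k) := by
        intro k; simp [Pi.smul_apply, smul_eq_mul]; ring
      rw [Finset.sum_congr rfl fun k _ => this k, ← Finset.mul_sum, h, mul_zero]
  · -- the dual is contained in the code
    intro hx
    have h1 : ∀ i, ∑ k, x k * G i k = 0 := fun i => hx (G i) (hGmem i)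
    have h2 : ∀ i, x (Sum.inl i)
        + ∑ j, x (Sum.inr j) * borderedQ p (1 + DualNumber.eps + DualNumber.eps * ω)
            (ω + DualNumber.eps * ω) (1 + ω) DualNumber.eps (1 + DualNumber.eps * ω)
            (1 + DualNumber.eps * ω) i j = 0 := by
      intro i
      have h := h1 i
      rw [Fintype.sum_sum_type] at h
      simp only [hGdef, borderedQDCGen, Sum.elim_inl, Sum.elim_inr, mul_ite, mul_one,
        mul_zero, Finset.sum_ite_eq, Finset.mem_univ, if_true] at h
      exact h
    have hxl : ∀ i, x (Sum.inl i)
        = ∑ j, x (Sum.inr j) * borderedQ p (1 + DualNumber.eps + DualNumber.eps * ω)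
            (ω + DualNumber.eps * ω) (1 + ω) DualNumber.eps (1 + DualNumber.eps * ω)
            (1 + DualNumber.eps * ω) i j := by
      intro i
      have h := eq_neg_of_add_eq_zero_left (h2 i)
      rw [h, R4_neg]
    have hcol : ∀ j' j : Option (ZMod p),
        ∑ i, borderedQ p (1 + DualNumber.eps + DualNumber.eps * ω) (ω + DualNumber.eps * ω)
            (1 + ω) DualNumber.eps (1 + DualNumber.eps * ω) (1 + DualNumber.eps * ω) i j'
          * borderedQ p (1 + DualNumber.eps + DualNumber.eps * ω) (ω + DualNumber.eps * ω)
            (1 + ω) DualNumber.eps (1 + DualNumber.eps * ω) (1 + DualNumber.eps * ω) i j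
        = if j' = j then 1 else 0 := by
      have hM1 : (Matrix.of (borderedQ p (1 + DualNumber.eps + DualNumber.eps * ω)
          (ω + DualNumber.eps * ω) (1 + ω) DualNumber.eps (1 + DualNumber.eps * ω)
          (1 + DualNumber.eps * ω)))
          * (Matrix.of (borderedQ p (1 + DualNumber.eps + DualNumber.eps * ω)
          (ω + DualNumber.eps * ω) (1 + ω) DualNumber.eps (1 + DualNumber.eps * ω)
          (1 + DualNumber.eps * ω)))ᵀ = 1 := by
        apply Matrix.ext
        intro i j
        rw [Matrix.mul_apply, Matrix.one_apply]
        simp only [Matrix.transpose_apply, Matrix.of_apply]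
        exact borderedQ_row_orth h7 ω hω i j
      have hM2 := mul_eq_one_comm.mp hM1
      intro j' j
      have h := congrFun (congrFun hM2 j') j
      rw [Matrix.mul_apply, Matrix.one_apply] at h
      simp only [Matrix.transpose_apply, Matrix.of_apply] at h
      exact h
    have hclaim : x = ∑ i, x (Sum.inl i) • G i := by
      funext k
      rw [Fintype.sum_apply]
      cases k with
      | inl j =>
        simp only [Pi.smul_apply, smul_eq_mul, hGdef, borderedQDCGen, Sum.elim_inl,
          mul_ite, mul_one, mul_zero]
        rw [Finset.sum_ite_eq']
        simp only [Finset.mem_univ, if_true]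
      | inr j =>
        simp only [Pi.smul_apply, smul_eq_mul, hGdef, borderedQDCGen, Sum.elim_inr]
        rw [Finset.sum_congr rfl fun i _ => by rw [hxl i]]
        simp only [Finset.sum_mul]
        rw [Finset.sum_comm]
        have hin : ∀ j' : Option (ZMod p),
            ∑ i : Option (ZMod p),
              x (Sum.inr j') * borderedQ p (1 + DualNumber.eps + DualNumber.eps * ω)
                  (ω + DualNumber.eps * ω) (1 + ω) DualNumber.eps (1 + DualNumber.eps * ω)
                  (1 + DualNumber.eps * ω) i j'
                * borderedQ p (1 + DualNumber.eps + DualNumber.eps * ω)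
                  (ω + DualNumber.eps * ω) (1 + ω) DualNumber.eps (1 + DualNumber.eps * ω)
                  (1 + DualNumber.eps * ω) i j
            = x (Sum.inr j') * (if j' = j then 1 else 0) := by
          intro j'
          rw [← hcol j' j, Finset.mul_sum]
          exact Finset.sum_congr rfl fun i _ => by ring
        rw [Finset.sum_congr rfl fun j' _ => hin j']
        simp only [mul_ite, mul_one, mul_zero]
        rw [Finset.sum_ite_eq']
        simp only [Finset.mem_univ, if_true]
    rw [hclaim]
    exact Submodule.sum_mem _ fun i _ => Submodule.smul_mem _ _ (hGmem i)

end
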